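/- Let J, J_1 = J \ {σ_{i_0}}, i_0, i_1 be as in the block decomposition, and let w_1 be the cycle (i_1, i_1−1, ..., i_0+1, i_0). If w ∈ S_n^J (i.e. ℓ(ws) > ℓ(w) for all s ∈ J), then w·w_1 ∈ S_n^{J_1}. -/

import Mathlib

open Equiv

/-- The simple transposition σ_i = (i, i+1) in S_n (0-indexed). -/
def simpleT (n i : ℕ) (h : i + 1 < n) : Perm (Fin n) :=
  Equiv.swap ⟨i, Nat.lt_of_succ_lt h⟩ ⟨i + 1, h⟩

/-- Coxeter length = number of inversions. -/
def len {n : ℕ} (w : Perm (Fin n)) : ℕ :=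
  (Finset.univ.filter fun p : Fin n × Fin n => p.1 < p.2 ∧ w p.2 < w p.1).card

/-- Parabolic subgroup generated by the simple reflections with indices in J. -/
def SJ (n : ℕ) (J : Set ℕ) : Subgroup (Perm (Fin n)) :=
  Subgroup.closure {s | ∃ i, ∃ h : i + 1 < n, i ∈ J ∧ s = simpleT n i h}

/-- Minimal length left coset representatives: ℓ(ws) > ℓ(w) for all s ∈ J. -/
def DJ (n : ℕ) (J : Set ℕ) : Set (Perm (Fin n)) :=
  {w | ∀ i, ∀ h : i + 1 < n, i ∈ J → len w < len (w * simpleT n i h)}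

/-- Minimal double coset representatives: ℓ(s₁v) > ℓ(v), ℓ(vs₂) > ℓ(v). -/
def D2 (n : ℕ) (J1 J2 : Set ℕ) : Set (Perm (Fin n)) :=
  {v | (∀ i, ∀ h : i + 1 < n, i ∈ J1 → len v < len (simpleT n i h * v)) ∧
       (∀ i, ∀ h : i + 1 < n, i ∈ J2 → len v < len (v * simpleT n i h))}

/-- Bruhat order: reflexive transitive closure of multiplying by a transposition
while increasing the length. -/
def BruhatLE {n : ℕ} (x y : Perm (Fin n)) : Prop :=
  Relation.ReflTransGen
    (fun u v => (∃ a b : Fin n, a ≠ b ∧ v = Equiv.swap a b * u) ∧ len u < len v) x y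

def BruhatLT {n : ℕ} (x y : Perm (Fin n)) : Prop := BruhatLE x y ∧ x ≠ y

/-- w is the cycle (i₁−j+1, …, i₀+1, i₀): sends i to i−1 for i₀ < i ≤ i₁−j+1,
sends i₀ to i₁−j+1, and fixes all other points. -/
def IsCycleW (n i0 i1 j : ℕ) (w : Perm (Fin n)) : Prop :=
  ∀ i : Fin n,
    ((i0 < (i : ℕ) ∧ (i : ℕ) ≤ i1 - j + 1) → (w i : ℕ) = (i : ℕ) - 1) ∧
    ((i : ℕ) = i0 → (w i : ℕ) = i1 - j + 1) ∧
    (((i : ℕ) < i0 ∨ i1 - j + 1 < (i : ℕ)) → w i = i)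

lemma swap_adj_lt_iff {n : ℕ} {a b : Fin n} (hadj : (a : ℕ) + 1 = b) (x y : Fin n)
    (h1 : ¬(x = a ∧ y = b)) (h2 : ¬(x = b ∧ y = a)) :
    Equiv.swap a b x < Equiv.swap a b y ↔ x < y := by
  rw [Equiv.swap_apply_def, Equiv.swap_apply_def]
  simp only [Fin.ext_iff, not_and] at h1 h2
  split_ifs <;> simp only [Fin.lt_def, Fin.ext_iff] at * <;> omega

lemma len_mul_simpleT_lt_iff {n : ℕ} (w : Perm (Fin n)) (i : ℕ) (h : i + 1 < n) :
    len w < len (w * simpleT n i h) ↔ w ⟨i, Nat.lt_of_succ_lt h⟩ < w ⟨i + 1, h⟩ := by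
  classical
  have hadj : ((⟨i, Nat.lt_of_succ_lt h⟩ : Fin n) : ℕ) + 1 = (⟨i + 1, h⟩ : Fin n) := rfl
  generalize ha' : (⟨i, Nat.lt_of_succ_lt h⟩ : Fin n) = a at *
  generalize hb' : (⟨i + 1, h⟩ : Fin n) = b at *
  have haltb : a < b := by rw [Fin.lt_def]; omega
  have hab : a ≠ b := ne_of_lt haltb
  have hsT : simpleT n i h = Equiv.swap a b := by rw [simpleT, ha', hb']
  set s : Perm (Fin n) := Equiv.swap a b with hs
  have hsa : s a = b := Equiv.swap_apply_left a b
  have hsb : s b = a := Equiv.swap_apply_right a b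
  have hss : ∀ x, s (s x) = x := fun x => Equiv.swap_apply_self a b x
  have step1 : len (w * simpleT n i h) =
      (Finset.univ.filter fun q : Fin n × Fin n => s q.1 < s q.2 ∧ w q.2 < w q.1).card := by
    unfold len
    refine Finset.card_nbij' (fun p => (s p.1, s p.2)) (fun q => (s q.1, s q.2)) ?_ ?_ ?_ ?_
    · intro p hp
      simp only [Finset.mem_coe, Finset.mem_filter, Finset.mem_univ, true_and, hsT, Perm.mul_apply] at hp ⊢
      exact ⟨by rw [hss, hss]; exact hp.1, hp.2⟩
    · intro q hq
      simp only [Finset.mem_coe, Finset.mem_filter, Finset.mem_univ, true_and, hsT, Perm.mul_apply] at hq ⊢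
      exact ⟨hq.1, by rw [hss, hss]; exact hq.2⟩
    · intro p _; simp [hss]
    · intro p _; simp [hss]
  have key : ∀ x y : Fin n, ¬(x = a ∧ y = b) → ¬(x = b ∧ y = a) → (s x < s y ↔ x < y) :=
    fun x y h1 h2 => swap_adj_lt_iff hadj x y h1 h2
  have hwab : w a ≠ w b := fun e => hab (w.injective e)
  rcases hwab.lt_or_gt with hcase | hcase
  · have hC : (Finset.univ.filter fun q : Fin n × Fin n => s q.1 < s q.2 ∧ w q.2 < w q.1)
        = insert (b, a) (Finset.univ.filter fun q : Fin n × Fin n => q.1 < q.2 ∧ w q.2 < w q.1) := by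
      ext q
      simp only [Finset.mem_insert, Finset.mem_filter, Finset.mem_univ, true_and]
      by_cases hba : q = (b, a)
      · subst hba
        simp only [true_or, iff_true]
        exact ⟨by rw [hsa, hsb]; exact haltb, hcase⟩
      · by_cases hab' : q = (a, b)
        · subst hab'
          simp only [hba, false_or]
          constructor
          · rintro ⟨h1, -⟩
            rw [hsa, hsb] at h1
            exact absurd h1 (asymm haltb)
          · rintro ⟨-, h2⟩
            exact absurd hcase (asymm h2)
        · have k1 : ¬(q.1 = a ∧ q.2 = b) := fun ⟨e1, e2⟩ => hab' (Prod.ext e1 e2)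
          have k2 : ¬(q.1 = b ∧ q.2 = a) := fun ⟨e1, e2⟩ => hba (Prod.ext e1 e2)
          rw [key q.1 q.2 k1 k2]
          simp [hba]
    have hnot : (b, a) ∉ (Finset.univ.filter fun q : Fin n × Fin n => q.1 < q.2 ∧ w q.2 < w q.1) := by
      intro hmem
      exact absurd (Finset.mem_filter.1 hmem).2.1 (asymm haltb)
    rw [step1, hC, Finset.card_insert_of_notMem hnot]
    unfold len
    exact iff_of_true (Nat.lt_succ_self _) hcase
  · have hD : (Finset.univ.filter fun q : Fin n × Fin n => q.1 < q.2 ∧ w q.2 < w q.1)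
        = insert (a, b) (Finset.univ.filter fun q : Fin n × Fin n => s q.1 < s q.2 ∧ w q.2 < w q.1) := by
      ext q
      simp only [Finset.mem_insert, Finset.mem_filter, Finset.mem_univ, true_and]
      by_cases hab' : q = (a, b)
      · subst hab'
        simp only [true_or, iff_true]
        exact ⟨haltb, hcase⟩
      · by_cases hba : q = (b, a)
        · subst hba
          simp only [hab', false_or]
          constructor
          · rintro ⟨h1, -⟩
            exact absurd h1 (asymm haltb)
          · rintro ⟨-, h2⟩
            exact absurd h2 (asymm hcase)
        · have k1 : ¬(q.1 = a ∧ q.2 = b) := fun ⟨e1, e2⟩ => hab' (Prod.ext e1 e2)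
          have k2 : ¬(q.1 = b ∧ q.2 = a) := fun ⟨e1, e2⟩ => hba (Prod.ext e1 e2)
          rw [key q.1 q.2 k1 k2]
          simp [hab']
    have hnot : (a, b) ∉ (Finset.univ.filter fun q : Fin n × Fin n => s q.1 < s q.2 ∧ w q.2 < w q.1) := by
      intro hmem
      have h1 := (Finset.mem_filter.1 hmem).2.1
      rw [hsa, hsb] at h1
      exact absurd h1 (asymm haltb)
    have hlenw : len w = (Finset.univ.filter fun q : Fin n × Fin n =>
        s q.1 < s q.2 ∧ w q.2 < w q.1).card + 1 := by
      unfold len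
      rw [hD, Finset.card_insert_of_notMem hnot]
    rw [step1]
    exact iff_of_false (by omega) (asymm hcase)

theorem stmt7 (n : ℕ) (J : Set ℕ) (hvalid : ∀ i ∈ J, i + 1 < n)
    (i0 i1 : ℕ) (hi0 : i0 ∈ J) (hmin : ∀ i ∈ J, i0 ≤ i)
    (hblock : ∀ i, i0 ≤ i → i < i1 → i ∈ J) (hmax : i1 ∉ J) (hlt : i0 < i1)
    (w1 : Perm (Fin n)) (hw1 : IsCycleW n i0 i1 1 w1)
    (w : Perm (Fin n)) (hwDJ : w ∈ DJ n J) :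
    w * w1 ∈ DJ n (J \ {i0}) := by
  have hsub : i1 - 1 + 1 = i1 := by omega
  intro i h hiJ
  obtain ⟨hiJ', hi0ne⟩ := hiJ
  have hine : i ≠ i0 := by simpa using hi0ne
  have hi0lt : i0 < i := lt_of_le_of_ne (hmin i hiJ') (Ne.symm hine)
  have hii1 : i ≠ i1 := fun e => hmax (e ▸ hiJ')
  rw [len_mul_simpleT_lt_iff]
  simp only [Perm.mul_apply]
  rcases lt_or_gt_of_ne hii1 with hcase | hcase
  · -- i0 < i < i1 : w1 i = i - 1, w1 (i+1) = i
    have h1 : w1 ⟨i, Nat.lt_of_succ_lt h⟩ = ⟨i - 1, by omega⟩ := by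
      have := (hw1 ⟨i, Nat.lt_of_succ_lt h⟩).1 ⟨hi0lt, by simp; omega⟩
      exact Fin.ext (by simpa using this)
    have h2 : w1 ⟨i + 1, h⟩ = ⟨i, Nat.lt_of_succ_lt h⟩ := by
      have := (hw1 ⟨i + 1, h⟩).1 ⟨by simp; omega, by simp; omega⟩
      exact Fin.ext (by simp at this ⊢; omega)
    rw [h1, h2]
    have hmem : i - 1 ∈ J := hblock _ (by omega) (by omega)
    have hn : (i - 1) + 1 < n := by omega
    have hkey := (len_mul_simpleT_lt_iff w (i - 1) hn).mp (hwDJ (i - 1) hn hmem)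
    have e1 : (⟨i - 1, Nat.lt_of_succ_lt hn⟩ : Fin n) = ⟨i - 1, by omega⟩ := rfl
    have e2 : (⟨(i - 1) + 1, hn⟩ : Fin n) = ⟨i, Nat.lt_of_succ_lt h⟩ := Fin.ext (by simp; omega)
    rw [e1, e2] at hkey
    exact hkey
  · -- i1 < i : w1 fixes i and i+1
    have h1 : w1 ⟨i, Nat.lt_of_succ_lt h⟩ = ⟨i, Nat.lt_of_succ_lt h⟩ :=
      (hw1 _).2.2 (Or.inr (by simp; omega))
    have h2 : w1 ⟨i + 1, h⟩ = ⟨i + 1, h⟩ :=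
      (hw1 _).2.2 (Or.inr (by simp; omega))
    rw [h1, h2]
    exact (len_mul_simpleT_lt_iff w i h).mp (hwDJ i h hiJ')
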